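/- In the partial-inheritance Gumbel-max model, if in addition q_{ii} ≥ θ for all i, where θ ∈ (1/2, 1), then the pivotal statistic Y = U_W satisfies ℙ(Y ≤ r) ≤ r for every r ∈ [0,1]; that is, Y stochastically dominates a Uniform(0,1) random variable. -/

import Mathlib

open MeasureTheory ProbabilityTheory Filter Set ENNReal

noncomputable def unif : Measure ℝ := volume.restrict (Set.Ioo (0:ℝ) 1)

lemma unif_Iic (c : ℝ) : unif (Set.Iic c) = ENNReal.ofReal (min c 1) := by
  rw [unif, Measure.restrict_apply measurableSet_Iic]
  rcases le_or_gt 1 c with h | h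
  · have : Set.Iic c ∩ Set.Ioo (0:ℝ) 1 = Set.Ioo 0 1 := by
      ext x; simp only [Set.mem_inter_iff, Set.mem_Iic, Set.mem_Ioo]
      constructor
      · tauto
      · intro hx; exact ⟨le_trans hx.2.le (by linarith), hx⟩
    rw [this, Real.volume_Ioo, min_eq_right h]; norm_num
  · have : Set.Iic c ∩ Set.Ioo (0:ℝ) 1 = Set.Ioc 0 c ∩ Set.Ioo 0 1 := by
      ext x; simp only [Set.mem_inter_iff, Set.mem_Iic, Set.mem_Ioo, Set.mem_Ioc]; tauto
    rcases le_or_gt c 0 with h0 | h0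
    · have h2 : Set.Iic c ∩ Set.Ioo (0:ℝ) 1 = ∅ := by
        ext x; simp only [Set.mem_inter_iff, Set.mem_Iic, Set.mem_Ioo, Set.mem_empty_iff_false]
        constructor
        · rintro ⟨h1, h2, _⟩; linarith
        · exact False.elim
      rw [h2, measure_empty, min_eq_left (by linarith), Eq.comm, ENNReal.ofReal_eq_zero]
      exact h0
    · have h2 : Set.Iic c ∩ Set.Ioo (0:ℝ) 1 = Set.Ioc 0 c := by
        ext x; simp only [Set.mem_inter_iff, Set.mem_Iic, Set.mem_Ioo, Set.mem_Ioc]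
        constructor
        · rintro ⟨h1, h2, _⟩; exact ⟨h2, h1⟩
        · rintro ⟨h1, h2⟩; exact ⟨h2, h1, lt_of_le_of_lt h2 h⟩
      rw [h2, Real.volume_Ioc, min_eq_left h.le]; norm_num

instance : IsProbabilityMeasure unif := by
  constructor
  rw [unif, Measure.restrict_apply MeasurableSet.univ, Set.univ_inter, Real.volume_Ioo]
  norm_num

lemma rpow_finsum {ι : Type*} (s : Finset ι) (x : ℝ) (hx : 0 < x) (c : ι → ℝ) :
    ∏ k ∈ s, x ^ (c k) = x ^ (∑ k ∈ s, c k) := by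
  classical
  induction s using Finset.induction with
  | empty => simp
  | insert a s h ih => simp [Finset.prod_insert h, Finset.sum_insert h, ih,
      Real.rpow_add hx]


lemma pi_slice {n : ℕ} (i : Fin (n+1)) (S : Set ℝ) (hS : MeasurableSet S)
    (h : ℝ → Fin (n+1) → ℝ) (hmeas : ∀ k, Measurable fun x => h x k) :
    (Measure.pi fun _ : Fin (n+1) => unif)
      {u : Fin (n+1) → ℝ | u i ∈ S ∧ ∀ k, k ≠ i → u k ≤ h (u i) k}
      = ∫⁻ x in S, ∏ t : Fin n, ENNReal.ofReal (min (h x (i.succAbove t)) 1) ∂unif := by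
  classical
  set e := MeasurableEquiv.piFinSuccAbove (fun _ : Fin (n+1) => ℝ) i with he
  have hmp := measurePreserving_piFinSuccAbove (fun _ : Fin (n+1) => unif) i
  set s : Set (ℝ × (Fin n → ℝ)) := {y | y.1 ∈ S ∧ ∀ t, y.2 t ≤ h y.1 (i.succAbove t)} with hs
  have hsm : MeasurableSet s := by
    have : s = (S ×ˢ (Set.univ : Set (Fin n → ℝ))) ∩
        ⋂ t : Fin n, {y : ℝ × (Fin n → ℝ) | y.2 t ≤ h y.1 (i.succAbove t)} := by
      ext y; simp only [hs, Set.mem_setOf_eq, Set.mem_inter_iff, Set.mem_prod, Set.mem_univ,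
        and_true, Set.mem_iInter]
    rw [this]
    exact (hS.prod MeasurableSet.univ).inter (MeasurableSet.iInter fun t =>
      measurableSet_le (by fun_prop) (by fun_prop))
  have hpre : {u : Fin (n+1) → ℝ | u i ∈ S ∧ ∀ k, k ≠ i → u k ≤ h (u i) k} = e ⁻¹' s := by
    ext u
    simp only [Set.mem_preimage, hs, Set.mem_setOf_eq, he,
      MeasurableEquiv.piFinSuccAbove_apply]
    constructor
    · rintro ⟨h1, h2⟩
      exact ⟨h1, fun t => h2 _ (Fin.succAbove_ne i t)⟩
    · rintro ⟨h1, h2⟩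
      refine ⟨h1, fun k hk => ?_⟩
      obtain ⟨t, rfl⟩ := Fin.exists_succAbove_eq hk
      exact h2 t
  rw [hpre, hmp.measure_preimage hsm.nullMeasurableSet, Measure.prod_apply hsm]
  have key : ∀ x, (Measure.pi fun _ : Fin n => unif) (Prod.mk x ⁻¹' s)
      = S.indicator (fun x => ∏ t, ENNReal.ofReal (min (h x (i.succAbove t)) 1)) x := by
    intro x
    by_cases hx : x ∈ S
    · have : Prod.mk x ⁻¹' s = Set.univ.pi fun t => Set.Iic (h x (i.succAbove t)) := by
        ext v; simp [hs, hx, Set.mem_pi, Pi.le_def]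
      rw [this, Measure.pi_pi]
      simp [unif_Iic, Set.indicator_of_mem hx]
    · have : Prod.mk x ⁻¹' s = ∅ := by ext v; simp [hs, hx]
      simp [this, Set.indicator_of_notMem hx]
  simp_rw [key]
  rw [lintegral_indicator hS]

lemma lint_rpow {s t c : ℝ} (hs : 0 ≤ s) (hst : s ≤ t) (hc : -1 < c) :
    ∫⁻ x in Set.Ioc s t, ENNReal.ofReal (x ^ c) ∂volume
      = ENNReal.ofReal ((t ^ (c+1) - s ^ (c+1)) / (c+1)) := by
  have hint : IntegrableOn (fun x : ℝ => x ^ c) (Set.Ioc s t) volume := by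
    rw [← intervalIntegrable_iff_integrableOn_Ioc_of_le hst]
    exact intervalIntegral.intervalIntegrable_rpow' hc
  rw [← ofReal_integral_eq_lintegral_ofReal hint ?_]
  · rw [← intervalIntegral.integral_of_le hst, integral_rpow (Or.inl hc)]
  · filter_upwards [ae_restrict_mem measurableSet_Ioc] with x hx
    exact Real.rpow_nonneg (le_trans hs hx.1.le) c

lemma region_diag {n : ℕ} (p : Fin (n+1) → ℝ) (hp : ∀ k, 0 < p k)
    (hpsum : ∑ k, p k = 1) {r : ℝ} (hr0 : 0 < r) (hr1 : r < 1) (i : Fin (n+1)) :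
    (Measure.pi fun _ : Fin (n+1) => unif)
      {u : Fin (n+1) → ℝ | (∀ k, u k ∈ Set.Ioo (0:ℝ) 1) ∧ u i ≤ r ∧
        ∀ k, k ≠ i → u k < u i ^ (p k / p i)}
      ≤ ENNReal.ofReal (p i * r ^ (1 / p i)) := by
  have hpi := hp i
  have hsub : {u : Fin (n+1) → ℝ | (∀ k, u k ∈ Set.Ioo (0:ℝ) 1) ∧ u i ≤ r ∧
        ∀ k, k ≠ i → u k < u i ^ (p k / p i)}
      ⊆ {u : Fin (n+1) → ℝ | u i ∈ Set.Ioc 0 r ∧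
          ∀ k, k ≠ i → u k ≤ (fun (x : ℝ) (k : Fin (n+1)) => x ^ (p k / p i)) (u i) k} := by
    rintro u ⟨h1, h2, h3⟩
    exact ⟨⟨(h1 i).1, h2⟩, fun k hk => (h3 k hk).le⟩
  refine le_trans (measure_mono hsub) ?_
  have hps := pi_slice i (Set.Ioc 0 r) measurableSet_Ioc
    (fun (x : ℝ) (k : Fin (n+1)) => x ^ (p k / p i)) (fun k => by fun_prop)
  rw [hps]
  have hcong : ∀ x ∈ Set.Ioc (0:ℝ) r,
      (∏ t : Fin n, ENNReal.ofReal
          (min ((fun (x : ℝ) (k : Fin (n+1)) => x ^ (p k / p i)) x (i.succAbove t)) 1))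
        = ENNReal.ofReal (x ^ ((1 - p i) / p i)) := by
    intro x hx
    have hx0 : 0 < x := hx.1
    have hx1 : x ≤ 1 := le_trans hx.2 hr1.le
    have hmin : ∀ t : Fin n, min (x ^ (p (i.succAbove t) / p i)) 1
        = x ^ (p (i.succAbove t) / p i) := fun t =>
      min_eq_left (Real.rpow_le_one hx0.le hx1 (le_of_lt (div_pos (hp _) hpi)))
    simp only []
    simp_rw [hmin]
    rw [← ENNReal.ofReal_prod_of_nonneg (fun t _ => Real.rpow_nonneg hx0.le _),
      rpow_finsum _ x hx0, ← Finset.sum_div]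
    have hsp := Fin.sum_univ_succAbove p i
    rw [hpsum] at hsp
    have hsum2 : ∑ t : Fin n, p (i.succAbove t) = 1 - p i := by linarith
    rw [hsum2]
  rw [setLIntegral_congr_fun measurableSet_Ioc hcong]
  unfold unif
  rw [Measure.restrict_restrict measurableSet_Ioc]
  have hinter : Set.Ioc 0 r ∩ Set.Ioo (0:ℝ) 1 = Set.Ioc 0 r := by
    apply Set.inter_eq_left.mpr
    intro x hx
    exact ⟨hx.1, lt_of_le_of_lt hx.2 hr1⟩
  have hexp : -1 < (1 - p i) / p i := by
    have h1 : (1 - p i) / p i + 1 = 1 / p i := by field_simp; ring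
    have h2 : 0 < 1 / p i := by positivity
    linarith
  rw [hinter, lint_rpow le_rfl hr0.le hexp]
  apply ENNReal.ofReal_le_ofReal
  apply le_of_eq
  have h1 : (1 - p i) / p i + 1 = 1 / p i := by field_simp; ring
  rw [h1, Real.zero_rpow (by positivity)]
  rw [sub_zero, div_div_eq_mul_div, div_one]
  ring

lemma region_off {n : ℕ} (p : Fin (n+1) → ℝ) (hp : ∀ k, 0 < p k)
    (hpsum : ∑ k, p k = 1) {r : ℝ} (hr0 : 0 < r) (hr1 : r < 1) {i j : Fin (n+1)}
    (hij : j ≠ i) (hsum2 : p i + p j ≤ 1) (hpj1 : p j < 1) :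
    (Measure.pi fun _ : Fin (n+1) => unif)
      {u : Fin (n+1) → ℝ | (∀ k, u k ∈ Set.Ioo (0:ℝ) 1) ∧ u j ≤ r ∧
        ∀ k, k ≠ i → u k < u i ^ (p k / p i)}
      ≤ ENNReal.ofReal (p i * (r - p j * r ^ (1 / p j)) / (1 - p j)) := by
  classical
  have hpi := hp i
  have hpj := hp j
  obtain ⟨tj, htj⟩ := Fin.exists_succAbove_eq hij
  have hsub : {u : Fin (n+1) → ℝ | (∀ k, u k ∈ Set.Ioo (0:ℝ) 1) ∧ u j ≤ r ∧
        ∀ k, k ≠ i → u k < u i ^ (p k / p i)}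
      ⊆ {u : Fin (n+1) → ℝ | u i ∈ Set.Ioo 0 1 ∧ ∀ k, k ≠ i → u k ≤
          (fun (x : ℝ) (k : Fin (n+1)) =>
            min (x ^ (p k / p i)) (if k = j then r else 1)) (u i) k} := by
    rintro u ⟨h1, h2, h3⟩
    refine ⟨h1 i, fun k hk => le_min (h3 k hk).le ?_⟩
    by_cases hkj : k = j
    · subst hkj; simp [h2]
    · simp [hkj, (h1 k).2.le]
  refine le_trans (measure_mono hsub) ?_
  have hps := pi_slice i (Set.Ioo 0 1) measurableSet_Ioo
    (fun (x : ℝ) (k : Fin (n+1)) => min (x ^ (p k / p i)) (if k = j then r else 1))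
    (fun k => Measurable.min (by fun_prop) measurable_const)
  rw [hps]
  have hcong : ∀ x ∈ Set.Ioo (0:ℝ) 1,
      (∏ t : Fin n, ENNReal.ofReal
          (min ((fun (x : ℝ) (k : Fin (n+1)) =>
            min (x ^ (p k / p i)) (if k = j then r else 1)) x (i.succAbove t)) 1))
        = ENNReal.ofReal (min (x ^ (p j / p i)) r * x ^ ((1 - p i - p j) / p i)) := by
    intro x hx
    have hx0 : 0 < x := hx.1
    have hx1 : x ≤ 1 := hx.2.le
    have hr1le : ∀ k : Fin (n+1), x ^ (p k / p i) ≤ 1 :=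
      fun k => Real.rpow_le_one hx0.le hx1 (le_of_lt (div_pos (hp k) hpi))
    have hmin1 : ∀ t : Fin n,
        min (min (x ^ (p (i.succAbove t) / p i)) (if i.succAbove t = j then r else 1)) 1
          = min (x ^ (p (i.succAbove t) / p i)) (if i.succAbove t = j then r else 1) :=
      fun t => min_eq_left (le_trans (min_le_left _ _) (hr1le _))
    have hnn : ∀ t : Fin n,
        0 ≤ min (x ^ (p (i.succAbove t) / p i)) (if i.succAbove t = j then r else 1) :=
      fun t => le_min (Real.rpow_nonneg hx0.le _) (by split <;> linarith)
    simp only []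
    simp_rw [hmin1]
    rw [← ENNReal.ofReal_prod_of_nonneg (fun t _ => hnn t)]
    congr 1
    rw [← Finset.mul_prod_erase Finset.univ _ (Finset.mem_univ tj), htj, if_pos rfl]
    congr 1
    have hne : ∀ t ∈ Finset.univ.erase tj,
        min (x ^ (p (i.succAbove t) / p i)) (if i.succAbove t = j then r else 1)
          = x ^ (p (i.succAbove t) / p i) := by
      intro t ht
      have htne : i.succAbove t ≠ j := by
        rw [← htj]
        exact fun hcon => (Finset.mem_erase.mp ht).1 (Fin.succAbove_right_injective hcon)
      rw [if_neg htne, min_eq_left (hr1le _)]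
    rw [Finset.prod_congr rfl hne, rpow_finsum _ x hx0, ← Finset.sum_div]
    have hsp := Fin.sum_univ_succAbove p i
    rw [hpsum] at hsp
    have herase : ∑ t ∈ Finset.univ.erase tj, p (i.succAbove t)
        = (∑ t : Fin n, p (i.succAbove t)) - p j := by
      rw [← Finset.sum_erase_add Finset.univ _ (Finset.mem_univ tj), htj]
      ring
    have hfin : (∑ t : Fin n, p (i.succAbove t)) - p j = 1 - p i - p j := by linarith
    rw [herase, hfin]
  rw [setLIntegral_congr_fun measurableSet_Ioo hcong]
  unfold unif
  rw [Measure.restrict_restrict measurableSet_Ioo, Set.inter_self]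
  set t0 := r ^ (p i / p j) with ht0
  have ht00 : 0 < t0 := Real.rpow_pos_of_pos hr0 _
  have ht01 : t0 < 1 := Real.rpow_lt_one hr0.le hr1 (div_pos hpi hpj)
  have hmono : ∫⁻ (x : ℝ) in Set.Ioo 0 1,
      ENNReal.ofReal (min (x ^ (p j / p i)) r * x ^ ((1 - p i - p j) / p i)) ∂volume
      ≤ ∫⁻ (x : ℝ) in Set.Ioc 0 1,
      ENNReal.ofReal (min (x ^ (p j / p i)) r * x ^ ((1 - p i - p j) / p i)) ∂volume :=
    lintegral_mono_set Set.Ioo_subset_Ioc_self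
  refine le_trans hmono ?_
  rw [← Set.Ioc_union_Ioc_eq_Ioc ht00.le ht01.le,
    lintegral_union measurableSet_Ioc (Set.Ioc_disjoint_Ioc_of_le le_rfl)]
  have hb1 : ∫⁻ (x : ℝ) in Set.Ioc 0 t0,
      ENNReal.ofReal (min (x ^ (p j / p i)) r * x ^ ((1 - p i - p j) / p i)) ∂volume
      ≤ ∫⁻ (x : ℝ) in Set.Ioc 0 t0, ENNReal.ofReal (x ^ ((1 - p i) / p i)) ∂volume := by
    apply setLIntegral_mono (by fun_prop)
    intro x hx
    apply ENNReal.ofReal_le_ofReal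
    calc min (x ^ (p j / p i)) r * x ^ ((1 - p i - p j) / p i)
        ≤ x ^ (p j / p i) * x ^ ((1 - p i - p j) / p i) :=
          mul_le_mul_of_nonneg_right (min_le_left _ _) (Real.rpow_nonneg hx.1.le _)
      _ = x ^ ((1 - p i) / p i) := by
          rw [← Real.rpow_add hx.1]
          congr 1
          field_simp
          ring
  have hb2 : ∫⁻ (x : ℝ) in Set.Ioc t0 1,
      ENNReal.ofReal (min (x ^ (p j / p i)) r * x ^ ((1 - p i - p j) / p i)) ∂volume
      ≤ ∫⁻ (x : ℝ) in Set.Ioc t0 1,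
        ENNReal.ofReal r * ENNReal.ofReal (x ^ ((1 - p i - p j) / p i)) ∂volume := by
    apply setLIntegral_mono (by fun_prop)
    intro x hx
    rw [← ENNReal.ofReal_mul hr0.le]
    apply ENNReal.ofReal_le_ofReal
    exact mul_le_mul_of_nonneg_right (min_le_right _ _)
      (Real.rpow_nonneg (le_trans ht00.le hx.1.le) _)
  refine le_trans (add_le_add hb1 hb2) ?_
  rw [lintegral_const_mul' _ _ ENNReal.ofReal_ne_top]
  have hexp1 : -1 < (1 - p i) / p i := by
    have h1 : (1 - p i) / p i + 1 = 1 / p i := by field_simp; ring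
    have h2 : 0 < 1 / p i := by positivity
    linarith
  have hexp2 : -1 < (1 - p i - p j) / p i := by
    have : 0 ≤ (1 - p i - p j) / p i := div_nonneg (by linarith) hpi.le
    linarith
  rw [lint_rpow le_rfl ht00.le hexp1, lint_rpow ht00.le ht01.le hexp2]
  have e1 : (1 - p i) / p i + 1 = 1 / p i := by field_simp; ring
  have e2 : (1 - p i - p j) / p i + 1 = (1 - p j) / p i := by field_simp; ring
  have et1 : t0 ^ (1 / p i) = r ^ (1 / p j) := by
    rw [ht0, ← Real.rpow_mul hr0.le]
    congr 1
    field_simp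
  have et2 : t0 ^ ((1 - p j) / p i) = r ^ ((1 - p j) / p j) := by
    rw [ht0, ← Real.rpow_mul hr0.le]
    congr 1
    field_simp
  rw [e1, e2, et1, et2, Real.zero_rpow (by positivity), Real.one_rpow, sub_zero]
  have key : r * r ^ ((1 - p j) / p j) = r ^ (1 / p j) := by
    have h3 : r ^ ((1:ℝ) + (1 - p j) / p j) = r ^ (1:ℝ) * r ^ ((1 - p j) / p j) :=
      Real.rpow_add hr0 _ _
    rw [Real.rpow_one] at h3
    rw [← h3]
    congr 1
    field_simp
    ring
  have hR1 : r ^ ((1 - p j) / p j) ≤ 1 :=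
    Real.rpow_le_one hr0.le hr1.le (div_nonneg (by linarith) hpj.le)
  rw [← ENNReal.ofReal_mul hr0.le, ← ENNReal.ofReal_add]
  · apply ENNReal.ofReal_le_ofReal
    apply le_of_eq
    have hb0 : (1:ℝ) - p j > 0 := by linarith
    field_simp
    nlinarith [key]
  · positivity
  · apply mul_nonneg hr0.le
    exact div_nonneg (by linarith) (div_nonneg (by linarith) hpi.le)

lemma algebra_ineq {m : ℕ} (p : Fin m → ℝ) (hp : ∀ i, 0 < p i) (hpsum : ∑ i, p i = 1)
    (hp1 : ∀ i, p i < 1)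
    (q : Fin m → Fin m → ℝ) (hq0 : ∀ i j, 0 ≤ q i j) (hq1 : ∀ i, ∑ j, q i j = 1)
    (θ : ℝ) (hθ1 : 1/2 < θ) (hqdiag : ∀ i, θ ≤ q i i)
    {r : ℝ} (hr0 : 0 < r) (hr1 : r < 1) :
    ∑ i, ∑ j, q i j *
      (if j = i then p i * r ^ (1/p i) else p i * (r - p j * r ^ (1/p j)) / (1 - p j)) ≤ r := by
  classical
  set φ : Fin m → ℝ := fun k => r - r ^ (1/p k) with hφdef
  have hφ0 : ∀ k, 0 ≤ φ k := by
    intro k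
    have h1 : r ^ (1/p k) ≤ r := by
      have h2 := Real.rpow_le_rpow_of_exponent_ge hr0 hr1.le
        (show (1:ℝ) ≤ 1/p k by rw [le_div_iff₀ (hp k)]; simpa using (hp1 k).le)
      simpa [Real.rpow_one] using h2
    simp only [hφdef]
    linarith
  set ψ : Fin m → ℝ := fun k => p k * φ k / (1 - p k) with hψdef
  have hψ0 : ∀ k, 0 ≤ ψ k :=
    fun k => div_nonneg (mul_nonneg (hp k).le (hφ0 k)) (by linarith [hp1 k])
  have hψ1 : ∀ k, (1 - p k) * ψ k = p k * φ k := by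
    intro k
    have : (1:ℝ) - p k ≠ 0 := by have := hp1 k; intro h; linarith
    rw [hψdef]
    field_simp
  have hqle : ∀ i j, ¬ (j = i) → q i j ≤ 1 - θ := by
    intro i j hji
    have hpair : q i i + q i j = ∑ l ∈ ({i, j} : Finset (Fin m)), q i l :=
      (Finset.sum_pair (fun h => hji h.symm)).symm
    have hle : ∑ l ∈ ({i, j} : Finset (Fin m)), q i l ≤ ∑ l, q i l :=
      Finset.sum_le_sum_of_subset_of_nonneg (Finset.subset_univ _) (fun l _ _ => hq0 i l)
    rw [hq1 i] at hle
    have hd := hqdiag i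
    rw [← hpair] at hle
    linarith
  have hrow : ∀ i, ∑ j, q i j *
      (if j = i then p i * r ^ (1/p i) else p i * (r - p j * r ^ (1/p j)) / (1 - p j))
      = p i * r - q i i * (p i * φ i) + ∑ j, (if j = i then 0 else q i j * (p i * ψ j)) := by
    intro i
    have hterm : ∀ j, q i j * (if j = i then p i * r ^ (1/p i)
        else p i * (r - p j * r ^ (1/p j)) / (1 - p j))
        = q i j * (p i * r) + ((if j = i then -(q i i * (p i * φ i)) else 0)
            + (if j = i then 0 else q i j * (p i * ψ j))) := by
      intro j
      by_cases hji : j = i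
      · subst hji
        simp only [eq_self_iff_true, if_true]
        have hrp : r ^ (1/p j) = r - φ j := by simp [hφdef]
        rw [hrp]; ring
      · simp only [if_neg hji]
        have h1 : (1:ℝ) - p j ≠ 0 := by have := hp1 j; intro h; linarith
        have h2 : p i * (r - p j * r ^ (1/p j)) / (1 - p j) = p i * r + p i * ψ j := by
          have hrp : r ^ (1/p j) = r - φ j := by simp [hφdef]
          rw [hrp, hψdef]
          field_simp
          ring
        rw [h2]; ring
    rw [Finset.sum_congr rfl (fun j _ => hterm j), Finset.sum_add_distrib,
      Finset.sum_add_distrib, ← Finset.sum_mul, hq1 i, one_mul,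
      Finset.sum_ite_eq' Finset.univ i (fun j => -(q i i * (p i * φ i)))]
    simp only [Finset.mem_univ, if_pos]
    ring
  rw [Finset.sum_congr rfl (fun i _ => hrow i), Finset.sum_add_distrib,
    Finset.sum_sub_distrib, ← Finset.sum_mul, hpsum, one_mul]
  have hinner : ∀ j, ∑ i, (if j = i then 0 else q i j * (p i * ψ j))
      ≤ (1-θ) * ((1 - p j) * ψ j) := by
    intro j
    have h1 : ∑ i, (if j = i then 0 else q i j * (p i * ψ j))
        ≤ ∑ i, (if j = i then 0 else (1-θ) * (p i * ψ j)) := by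
      apply Finset.sum_le_sum
      intro i _
      by_cases h : j = i
      · simp [h]
      · simp only [if_neg h]
        exact mul_le_mul_of_nonneg_right (hqle i j h) (mul_nonneg (hp i).le (hψ0 j))
    have h3 : ∑ i, (if j = i then 0 else p i) = 1 - p j := by
      have h4 : ∑ i, (if j = i then 0 else p i)
          = (∑ i, p i) - ∑ i, (if j = i then p i else 0) := by
        rw [← Finset.sum_sub_distrib]
        apply Finset.sum_congr rfl
        intro i _
        by_cases h : j = i <;> simp [h]
      rw [h4, hpsum, Finset.sum_ite_eq Finset.univ j p]
      simp
    have h2 : ∑ i, (if j = i then 0 else (1-θ) * (p i * ψ j))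
        = (1-θ) * ψ j * ∑ i, (if j = i then 0 else p i) := by
      rw [Finset.mul_sum]
      apply Finset.sum_congr rfl
      intro i _
      by_cases h : j = i
      · simp [h]
      · simp only [if_neg h]; ring
    rw [h2, h3] at h1
    refine le_trans h1 (le_of_eq ?_)
    ring
  have hS : ∑ i, ∑ j, (if j = i then 0 else q i j * (p i * ψ j))
      ≤ (1-θ) * ∑ j, p j * φ j := by
    rw [Finset.sum_comm]
    calc ∑ j, ∑ i, (if j = i then 0 else q i j * (p i * ψ j))
        ≤ ∑ j, (1-θ) * ((1 - p j) * ψ j) := Finset.sum_le_sum (fun j _ => hinner j)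
      _ = (1-θ) * ∑ j, ((1 - p j) * ψ j) := (Finset.mul_sum _ _ _).symm
      _ = (1-θ) * ∑ j, p j * φ j := by rw [Finset.sum_congr rfl (fun j _ => hψ1 j)]
  have hD : θ * ∑ i, p i * φ i ≤ ∑ i, q i i * (p i * φ i) := by
    rw [Finset.mul_sum]
    exact Finset.sum_le_sum (fun i _ =>
      mul_le_mul_of_nonneg_right (hqdiag i) (mul_nonneg (hp i).le (hφ0 i)))
  have hsφ : 0 ≤ ∑ i, p i * φ i :=
    Finset.sum_nonneg (fun i _ => mul_nonneg (hp i).le (hφ0 i))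
  have hθhalf : 1 - θ ≤ θ := by linarith
  have hmid : (1-θ) * ∑ j, p j * φ j ≤ θ * ∑ j, p j * φ j :=
    mul_le_mul_of_nonneg_right hθhalf hsφ
  linarith


/-- In the partial-inheritance Gumbel-max model, if in addition
`q_{ii} ≥ θ` for all `i`, with `θ ∈ (1/2, 1)`, then the pivotal statistic `Y = U_W`
satisfies `ℙ(Y ≤ r) ≤ r` for every `r ∈ [0,1]`, i.e. `Y` stochastically dominates a
`Uniform(0,1)` random variable. -/
theorem stmt_4
    {Ω : Type*} [MeasurableSpace Ω] (μ : Measure Ω) [IsProbabilityMeasure μ]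
    (m : ℕ) (hm : 2 ≤ m) (p : Fin m → ℝ)
    (hp : ∀ i, 0 < p i) (hpsum : ∑ i, p i = 1)
    (U : Fin m → Ω → ℝ) (hUmeas : ∀ i, Measurable (U i))
    (hUlaw : Measure.map (fun ω i => U i ω) μ
      = Measure.pi fun _ : Fin m => volume.restrict (Set.Ioo (0:ℝ) 1))
    (I : Ω → Fin m) (hImeas : Measurable I)
    (hI : ∀ᵐ ω ∂μ, ∀ j, j ≠ I ω →
      Real.log (U j ω) / p j < Real.log (U (I ω) ω) / p (I ω))
    (q : Fin m → Fin m → ℝ) (hq0 : ∀ i j, 0 ≤ q i j) (hq1 : ∀ i, ∑ j, q i j = 1)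
    (θ : ℝ) (hθ : θ ∈ Set.Ioo (1/2 : ℝ) 1) (hqdiag : ∀ i, θ ≤ q i i)
    (W : Ω → Fin m) (hWmeas : Measurable W)
    (hW : ∀ (j : Fin m) (A : Set (Fin m → ℝ)), MeasurableSet A →
      μ ({ω | W ω = j} ∩ (fun ω i => U i ω) ⁻¹' A)
        = ∫⁻ ω in (fun ω i => U i ω) ⁻¹' A, ENNReal.ofReal (q (I ω) j) ∂μ) :
    ∀ r ∈ Set.Icc (0:ℝ) 1, μ {ω | U (W ω) ω ≤ r} ≤ ENNReal.ofReal r := by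
  classical
  obtain ⟨n, rfl⟩ : ∃ n, m = n + 1 := ⟨m - 1, by omega⟩
  intro r hr
  have hV : Measurable (fun ω i => U i ω) := measurable_pi_lambda _ hUmeas
  have hUlaw' : Measure.map (fun ω i => U i ω) μ
      = Measure.pi (fun _ : Fin (n+1) => unif) := hUlaw
  -- a.e. all coordinates lie in (0,1)
  have hSιmeas : MeasurableSet {u : Fin (n+1) → ℝ | ∀ k, u k ∈ Set.Ioo (0:ℝ) 1} := by
    have : {u : Fin (n+1) → ℝ | ∀ k, u k ∈ Set.Ioo (0:ℝ) 1}
        = Set.univ.pi (fun _ => Set.Ioo (0:ℝ) 1) := by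
      ext u; simp [Set.mem_pi]
    rw [this]
    exact MeasurableSet.univ_pi (fun _ => measurableSet_Ioo)
  have hgood : ∀ᵐ ω ∂μ, ∀ k, U k ω ∈ Set.Ioo (0:ℝ) 1 := by
    rw [ae_iff]
    have hset : {ω | ¬ ∀ k, U k ω ∈ Set.Ioo (0:ℝ) 1}
        = (fun ω i => U i ω) ⁻¹' {u : Fin (n+1) → ℝ | ∀ k, u k ∈ Set.Ioo (0:ℝ) 1}ᶜ := rfl
    rw [hset, ← Measure.map_apply hV hSιmeas.compl, hUlaw']
    rw [measure_compl hSιmeas (measure_ne_top _ _)]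
    have hpi1 : (Measure.pi (fun _ : Fin (n+1) => unif))
        {u : Fin (n+1) → ℝ | ∀ k, u k ∈ Set.Ioo (0:ℝ) 1} = 1 := by
      have : {u : Fin (n+1) → ℝ | ∀ k, u k ∈ Set.Ioo (0:ℝ) 1}
          = Set.univ.pi (fun _ => Set.Ioo (0:ℝ) 1) := by
        ext u; simp [Set.mem_pi]
      rw [this, Measure.pi_pi]
      have hu : unif (Set.Ioo (0:ℝ) 1) = 1 := by
        unfold unif
        rw [Measure.restrict_apply measurableSet_Ioo, Set.inter_self, Real.volume_Ioo]
        norm_num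
      simp [hu]
    rw [hpi1, measure_univ, tsub_self]
  rcases eq_or_lt_of_le hr.1 with hr0 | hr0
  · -- r = 0
    have hnull : μ {ω | ¬ ∀ k, U k ω ∈ Set.Ioo (0:ℝ) 1} = 0 := ae_iff.mp hgood
    have hss : {ω | U (W ω) ω ≤ r} ⊆ {ω | ¬ ∀ k, U k ω ∈ Set.Ioo (0:ℝ) 1} := by
      intro ω hω hcon
      have h2 := (hcon (W ω)).1
      simp only [Set.mem_setOf_eq] at hω
      rw [← hr0] at hω
      linarith
    rw [measure_mono_null hss hnull]
    exact zero_le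
  rcases eq_or_lt_of_le hr.2 with hr1 | hr1
  · -- r = 1
    rw [hr1]
    simp only [ENNReal.ofReal_one]
    exact prob_le_one
  -- now 0 < r < 1
  have hplt1 : ∀ k : Fin (n+1), p k < 1 := by
    intro k
    have : Nontrivial (Fin (n+1)) := Fin.nontrivial_iff_two_le.mpr hm
    obtain ⟨l, hl⟩ := exists_ne k
    have hpair : p k + p l = ∑ x ∈ ({k, l} : Finset (Fin (n+1))), p x :=
      (Finset.sum_pair hl.symm).symm
    have hle : ∑ x ∈ ({k, l} : Finset (Fin (n+1))), p x ≤ ∑ x, p x :=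
      Finset.sum_le_sum_of_subset_of_nonneg (Finset.subset_univ _) (fun x _ _ => (hp x).le)
    rw [hpsum, ← hpair] at hle
    have := hp l
    linarith
  have hpairsum : ∀ i j : Fin (n+1), j ≠ i → p i + p j ≤ 1 := by
    intro i j hij
    have hpair : p i + p j = ∑ x ∈ ({i, j} : Finset (Fin (n+1))), p x :=
      (Finset.sum_pair (fun h => hij h.symm)).symm
    have hle : ∑ x ∈ ({i, j} : Finset (Fin (n+1))), p x ≤ ∑ x, p x :=
      Finset.sum_le_sum_of_subset_of_nonneg (Finset.subset_univ _) (fun x _ _ => (hp x).le)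
    rw [hpsum, ← hpair] at hle
    exact hle
  set b : Fin (n+1) → Fin (n+1) → ℝ := fun i j => if j = i then p i * r ^ (1/p i)
    else p i * (r - p j * r ^ (1/p j)) / (1 - p j) with hbdef
  -- decomposition over the value of W
  have hmeasUj : ∀ j : Fin (n+1), MeasurableSet {ω | U j ω ≤ r} :=
    fun j => measurableSet_le (hUmeas j) measurable_const
  have hmeasWj : ∀ j : Fin (n+1), MeasurableSet {ω | W ω = j} :=
    fun j => hWmeas (measurableSet_singleton j)
  have hmeasIi : ∀ i : Fin (n+1), MeasurableSet {ω | I ω = i} :=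
    fun i => hImeas (measurableSet_singleton i)
  have hdecomp : {ω | U (W ω) ω ≤ r} = ⋃ j, ({ω | W ω = j} ∩ {ω | U j ω ≤ r}) := by
    ext ω
    simp only [Set.mem_setOf_eq, Set.mem_iUnion, Set.mem_inter_iff]
    constructor
    · intro h; exact ⟨W ω, rfl, h⟩
    · rintro ⟨j, hj, h⟩; rw [hj]; exact h
  have hdisj : Pairwise (Function.onFun Disjoint
      fun j => ({ω | W ω = j} ∩ {ω | U j ω ≤ r})) := by
    intro j j' hne
    apply Set.disjoint_left.mpr
    rintro ω ⟨hj, _⟩ ⟨hj', _⟩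
    exact hne (hj.symm.trans hj')
  rw [hdecomp, measure_iUnion hdisj (fun j => (hmeasWj j).inter (hmeasUj j)), tsum_fintype]
  -- rewrite each term using hW and decompose by I
  have hstep : ∀ j : Fin (n+1), μ ({ω | W ω = j} ∩ {ω | U j ω ≤ r})
      = ∑ i, ENNReal.ofReal (q i j) * μ ({ω | I ω = i} ∩ {ω | U j ω ≤ r}) := by
    intro j
    have hA : MeasurableSet {u : Fin (n+1) → ℝ | u j ≤ r} :=
      measurableSet_le (measurable_pi_apply j) measurable_const
    have h1 := hW j _ hA
    have h0 : (fun ω i => U i ω) ⁻¹' {u : Fin (n+1) → ℝ | u j ≤ r} = {ω | U j ω ≤ r} := rfl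
    rw [h0] at h1
    rw [h1]
    have hfun : ∀ ω, ENNReal.ofReal (q (I ω) j)
        = ∑ i, Set.indicator {ω' | I ω' = i} (fun _ => ENNReal.ofReal (q i j)) ω := by
      intro ω
      rw [Finset.sum_eq_single (I ω)]
      · exact (Set.indicator_of_mem (show ω ∈ {ω' | I ω' = I ω} from rfl)
          (fun _ => ENNReal.ofReal (q (I ω) j))).symm
      · intro i _ hne
        exact Set.indicator_of_notMem
          (show ω ∉ {ω' | I ω' = i} from fun h => hne (Eq.symm h))
          (fun _ => ENNReal.ofReal (q i j))
      · intro h; exact absurd (Finset.mem_univ _) h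
    rw [lintegral_congr hfun, lintegral_finset_sum _ (fun i _ =>
      (measurable_const.indicator (hmeasIi i)))]
    apply Finset.sum_congr rfl
    intro i _
    rw [lintegral_indicator (hmeasIi i), setLIntegral_const,
      Measure.restrict_apply (hmeasIi i)]
  rw [Finset.sum_congr rfl (fun j _ => hstep j)]
  -- bound each joint probability by the pi-measure of the region
  have hIbound : ∀ i j : Fin (n+1), μ ({ω | I ω = i} ∩ {ω | U j ω ≤ r})
      ≤ ENNReal.ofReal (b i j) := by
    intro i j
    set R := {u : Fin (n+1) → ℝ | (∀ k, u k ∈ Set.Ioo (0:ℝ) 1) ∧ u j ≤ r ∧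
        ∀ k, k ≠ i → u k < u i ^ (p k / p i)} with hRdef
    have hRmeas : MeasurableSet R := by
      have h2 : MeasurableSet {u : Fin (n+1) → ℝ | u j ≤ r} :=
        measurableSet_le (measurable_pi_apply j) measurable_const
      have h3 : MeasurableSet {u : Fin (n+1) → ℝ | ∀ k, k ≠ i → u k < u i ^ (p k / p i)} := by
        have heq : {u : Fin (n+1) → ℝ | ∀ k, k ≠ i → u k < u i ^ (p k / p i)}
            = ⋂ k, ⋂ (_ : k ≠ i), {u : Fin (n+1) → ℝ | u k < u i ^ (p k / p i)} := by
          ext u; simp [Set.mem_iInter]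
        rw [heq]
        exact MeasurableSet.iInter fun k => MeasurableSet.iInter fun _ =>
          measurableSet_lt (measurable_pi_apply k) (by fun_prop)
      exact hSιmeas.inter (h2.inter h3)
    have hae : ∀ᵐ ω ∂μ, ω ∈ ({ω | I ω = i} ∩ {ω | U j ω ≤ r})
        → ω ∈ (fun ω i => U i ω) ⁻¹' R := by
      filter_upwards [hI, hgood] with ω hIω hgoodω
      rintro ⟨hIi, hUjr⟩
      simp only [Set.mem_setOf_eq] at hIi hUjr
      show (fun ω i => U i ω) ω ∈ R
      rw [hRdef]
      simp only [Set.mem_setOf_eq]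
      refine ⟨fun k => hgoodω k, hUjr, fun k hk => ?_⟩
      show U k ω < U i ω ^ (p k / p i)
      have hklog := hIω k (by rw [hIi]; exact hk)
      rw [hIi] at hklog
      have hUk := hgoodω k
      have hUi := hgoodω i
      have hlt : Real.log (U k ω) < Real.log (U i ω) * (p k / p i) := by
        rw [div_lt_div_iff₀ (hp k) (hp i)] at hklog
        rw [mul_div_assoc'] at *
        rw [lt_div_iff₀ (hp i)]
        linarith
      have hexp : U k ω = Real.exp (Real.log (U k ω)) := (Real.exp_log hUk.1).symm
      rw [hexp, Real.rpow_def_of_pos hUi.1]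
      exact Real.exp_lt_exp.mpr hlt
    calc μ ({ω | I ω = i} ∩ {ω | U j ω ≤ r})
        ≤ μ ((fun ω i => U i ω) ⁻¹' R) := by
          exact measure_mono_ae hae
      _ = (Measure.pi (fun _ : Fin (n+1) => unif)) R := by
          rw [← hUlaw', Measure.map_apply hV hRmeas]
      _ ≤ ENNReal.ofReal (b i j) := by
          by_cases hji : j = i
          · subst hji
            simp only [hbdef, if_pos]
            exact region_diag p hp hpsum hr0 hr1 j
          · simp only [hbdef]
            rw [if_neg hji]
            exact region_off p hp hpsum hr0 hr1 hji (hpairsum i j hji) (hplt1 j)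
  -- combine
  have hb0 : ∀ i j : Fin (n+1), 0 ≤ b i j := by
    intro i j
    have hrle : r ^ (1/p j) ≤ r := by
      have h2 := Real.rpow_le_rpow_of_exponent_ge hr0 hr1.le
        (show (1:ℝ) ≤ 1/p j by rw [le_div_iff₀ (hp j)]; simpa using (hplt1 j).le)
      simpa [Real.rpow_one] using h2
    simp only [hbdef]
    by_cases hji : j = i
    · rw [if_pos hji]
      exact mul_nonneg (hp i).le (Real.rpow_nonneg hr0.le _)
    · rw [if_neg hji]
      apply div_nonneg _ (by linarith [hplt1 j])
      apply mul_nonneg (hp i).le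
      nlinarith [hp j, (hplt1 j), hr0]
  calc ∑ j, ∑ i, ENNReal.ofReal (q i j) * μ ({ω | I ω = i} ∩ {ω | U j ω ≤ r})
      ≤ ∑ j, ∑ i, ENNReal.ofReal (q i j) * ENNReal.ofReal (b i j) := by
        apply Finset.sum_le_sum
        intro j _
        apply Finset.sum_le_sum
        intro i _
        exact mul_le_mul_right (hIbound i j) _
    _ = ∑ j, ∑ i, ENNReal.ofReal (q i j * b i j) := by
        apply Finset.sum_congr rfl; intro j _
        apply Finset.sum_congr rfl; intro i _
        rw [← ENNReal.ofReal_mul (hq0 i j)]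
    _ = ENNReal.ofReal (∑ j, ∑ i, q i j * b i j) := by
        rw [ENNReal.ofReal_sum_of_nonneg (fun j _ => Finset.sum_nonneg
          (fun i _ => mul_nonneg (hq0 i j) (hb0 i j)))]
        apply Finset.sum_congr rfl; intro j _
        rw [ENNReal.ofReal_sum_of_nonneg (fun i _ => mul_nonneg (hq0 i j) (hb0 i j))]
    _ ≤ ENNReal.ofReal r := by
        apply ENNReal.ofReal_le_ofReal
        rw [Finset.sum_comm]
        exact algebra_ineq p hp hpsum hplt1 q hq0 hq1 θ hθ.1 hqdiag hr0 hr1
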